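/- Let N be a unital C*-algebra and let r be a nonnegative integer such that the set {(x₀, …, x_r) ∈ (N_sa)^{r+1} : there exist y₀, …, y_r ∈ N with y₀x₀ + ⋯ + y_r x_r = 1} is dense in (N_sa)^{r+1}, where N_sa denotes the set of self-adjoint elements of N. Let A be a separable C*-subalgebra of N containing the unit of N. Then there exists a separable C*-subalgebra B of N with A ⊆ B ⊆ N and 1 ∈ B such that the set {(x₀, …, x_r) ∈ (B_sa)^{r+1} : there exist y₀, …, y_r ∈ B with y₀x₀ + ⋯ + y_r x_r = 1} is dense in (B_sa)^{r+1}. -/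
import Mathlib

open TopologicalSpace

lemma aux_countable_submonoid_closure {M : Type*} [Monoid M] {s : Set M} (hs : s.Countable) :
    (Submonoid.closure s : Set M).Countable := by
  have hsub : (Submonoid.closure s : Set M) ⊆ List.prod '' {l : List M | ∀ x ∈ l, x ∈ s} := by
    intro x hx
    obtain ⟨l, h1, h2⟩ := Submonoid.exists_list_of_mem_closure hx
    exact ⟨l, h1, h2⟩
  refine Set.Countable.mono hsub (Set.Countable.image ?_ _)
  haveI := hs.to_subtype
  have h2 : {l : List M | ∀ x ∈ l, x ∈ s} ⊆ Set.range (fun l : List s => l.map Subtype.val) := by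
    intro l hl
    refine ⟨l.pmap (fun x hx => (⟨x, hx⟩ : s)) hl, ?_⟩
    simp [List.map_pmap]
  exact (Set.countable_range _).mono h2

lemma aux_isSeparable_adjoin_closure {N : Type*} [CStarAlgebra N] {s : Set N} (hs : s.Countable) :
    IsSeparable (((StarAlgebra.adjoin ℂ s).topologicalClosure : StarSubalgebra ℂ N) : Set N) := by
  rw [StarSubalgebra.topologicalClosure_coe]
  apply TopologicalSpace.IsSeparable.closure
  have h1 : ((StarAlgebra.adjoin ℂ s : StarSubalgebra ℂ N) : Set N)
      = (Submodule.span ℂ ((Submonoid.closure (s ∪ star s) : Submonoid N) : Set N) : Set N) := by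
    have h := StarAlgebra.adjoin_eq_span (R := ℂ) (A := N) s
    exact congrArg (fun T : Submodule ℂ N => (T : Set N)) h
  rw [h1]
  have hcnt : ((Submonoid.closure (s ∪ star s) : Submonoid N) : Set N).Countable := by
    refine aux_countable_submonoid_closure (hs.union ?_)
    exact (hs.image star).mono (by intro x hx; exact ⟨star x, hx, star_star x⟩)
  exact hcnt.isSeparable.span

lemma aux_isSelfAdjoint_half {N : Type*} [CStarAlgebra N] (a : N) :
    IsSelfAdjoint ((2:ℂ)⁻¹ • (a + star a)) := by
  rw [IsSelfAdjoint, star_smul, star_add, star_star, add_comm]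
  congr 1
  simp

lemma aux_dist_half_le {N : Type*} [CStarAlgebra N] {x : N} (hx : IsSelfAdjoint x) (a : N) :
    dist x ((2:ℂ)⁻¹ • (a + star a)) ≤ dist x a := by
  have hx2 : x = (2:ℂ)⁻¹ • (x + star x) := by
    rw [hx.star_eq, ← two_smul ℂ x, smul_smul, inv_mul_cancel₀ (two_ne_zero), one_smul]
  calc dist x ((2:ℂ)⁻¹ • (a + star a))
      = ‖(2:ℂ)⁻¹ • ((x - a) + star (x - a))‖ := by
        nth_rewrite 1 [hx2]
        rw [dist_eq_norm, ← smul_sub, star_sub]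
        congr 1
        abel
    _ ≤ ‖(2:ℂ)⁻¹‖ * (‖x - a‖ + ‖star (x - a)‖) := by
        rw [norm_smul]
        exact mul_le_mul_of_nonneg_left (norm_add_le _ _) (norm_nonneg _)
    _ = dist x a := by
        rw [norm_star, dist_eq_norm]
        simp
        ring

def auxChainUnion {N : Type*} [CStarAlgebra N] (C : ℕ → StarSubalgebra ℂ N)
    (hC : Monotone C) : StarSubalgebra ℂ N where
  carrier := ⋃ n, (C n : Set N)
  mul_mem' := by
    intro a b ha hb
    obtain ⟨m, ha⟩ := Set.mem_iUnion.1 ha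
    obtain ⟨n, hb⟩ := Set.mem_iUnion.1 hb
    exact Set.mem_iUnion.2 ⟨max m n,
      mul_mem (hC (le_max_left m n) ha) (hC (le_max_right m n) hb)⟩
  add_mem' := by
    intro a b ha hb
    obtain ⟨m, ha⟩ := Set.mem_iUnion.1 ha
    obtain ⟨n, hb⟩ := Set.mem_iUnion.1 hb
    exact Set.mem_iUnion.2 ⟨max m n,
      add_mem (hC (le_max_left m n) ha) (hC (le_max_right m n) hb)⟩
  algebraMap_mem' := fun c => Set.mem_iUnion.2 ⟨0, algebraMap_mem (C 0) c⟩
  star_mem' := by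
    intro a ha
    obtain ⟨n, ha⟩ := Set.mem_iUnion.1 ha
    exact Set.mem_iUnion.2 ⟨n, star_mem ha⟩

/-- The set of `(r+1)`-tuples of *self-adjoint* elements of a unital star ring `D`
which generate `D` as a left ideal.  Density of this set in `(D_sa)^{r+1}` is the
Brown–Pedersen characterization of real rank at most `r`. -/
def LgSa (r : ℕ) (D : Type*) [Ring D] [StarRing D] : Set (Fin (r + 1) → D) :=
  {x | (∀ i, IsSelfAdjoint (x i)) ∧ ∃ y : Fin (r + 1) → D, ∑ i, y i * x i = 1}

/-- If `N` is a unital C*-algebra in which the self-adjoint tuples generating `N` as a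
left ideal are dense in `(N_sa)^{r+1}`, and `A ⊆ N` is a separable C*-subalgebra
containing the unit, then there is a separable C*-subalgebra `B` with `A ⊆ B ⊆ N`,
`1 ∈ B`, enjoying the same density property. -/
theorem exists_separable_intermediate_subalgebra_real_rank
    (N : Type*) [CStarAlgebra N] (r : ℕ)
    (hN : {x : Fin (r + 1) → N | ∀ i, IsSelfAdjoint (x i)} ⊆ closure (LgSa r N))
    (A : StarSubalgebra ℂ N) (hA_closed : IsClosed (A : Set N))
    (hA_sep : TopologicalSpace.SeparableSpace A) :
    ∃ B : StarSubalgebra ℂ N, IsClosed (B : Set N) ∧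
      TopologicalSpace.SeparableSpace B ∧ A ≤ B ∧ (1 : N) ∈ B ∧
      {x : Fin (r + 1) → B | ∀ i, IsSelfAdjoint (x i)} ⊆ closure (LgSa r B) := by
  classical
  -- countable dense subset of A
  have hAsep : IsSeparable (A : Set N) := IsSeparable.of_subtype _
  obtain ⟨t₀, ht₀A, ht₀c, ht₀d⟩ := hAsep.exists_countable_dense_subset
  -- notation
  set Cl : Set N → StarSubalgebra ℂ N :=
    fun s => (StarAlgebra.adjoin ℂ s).topologicalClosure with hClDef
  set Tups : Set N → Set (Fin (r + 1) → N) :=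
    fun s => {x | ∀ i, x i ∈ Cl s ∧ IsSelfAdjoint (x i)} with hTupsDef
  -- countable dense subsets of self-adjoint tuples
  have hDex : ∀ s : Set N, ∃ Ds : Set (Fin (r + 1) → N), s.Countable →
      (Ds.Countable ∧ Ds ⊆ Tups s ∧ Tups s ⊆ closure Ds) := by
    intro s
    by_cases hs : s.Countable
    · have hsep : IsSeparable (Tups s) := by
        have : Tups s = {x : Fin (r + 1) → N |
            ∀ i, x i ∈ {a : N | a ∈ Cl s ∧ IsSelfAdjoint a}} := rfl
        rw [this]
        refine isSeparable_pi fun i => ?_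
        exact (aux_isSeparable_adjoin_closure hs).mono (fun a ha => ha.1)
      obtain ⟨Ds, h1, h2, h3⟩ := hsep.exists_countable_dense_subset
      exact ⟨Ds, fun _ => ⟨h2, h1, h3⟩⟩
    · exact ⟨∅, fun h => absurd h hs⟩
  choose D hD using hDex
  -- approximants from density in N
  have happ : ∀ d : Fin (r + 1) → N, ∀ n : ℕ, ∃ z y : Fin (r + 1) → N,
      (∀ i, IsSelfAdjoint (d i)) → ((∀ i, IsSelfAdjoint (z i)) ∧ (∑ i, y i * z i = 1) ∧
        ∀ i, dist (d i) (z i) < 1 / (n + 1)) := by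
    intro d n
    by_cases hd : ∀ i, IsSelfAdjoint (d i)
    · have hmem : d ∈ closure (LgSa r N) := hN hd
      have hε : (0 : ℝ) < 1 / (n + 1) := by positivity
      obtain ⟨z, hzmem, hdz⟩ := Metric.mem_closure_iff.1 hmem _ hε
      obtain ⟨hzsa, y, hy⟩ := hzmem
      exact ⟨z, y, fun _ => ⟨hzsa, hy, (dist_pi_lt_iff hε).1 hdz⟩⟩
    · exact ⟨d, d, fun h => absurd h hd⟩
  choose Z Y hZY using happ
  -- the increasing chain of countable sets
  set step : Set N → Set N := fun s =>
    s ∪ ⋃ d ∈ D s, ⋃ n : ℕ, (Set.range (Z d n) ∪ Set.range (Y d n)) with hstepDef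
  set S : ℕ → Set N := fun n => Nat.rec t₀ (fun _ ih => step ih) n with hSDef
  have hS0 : S 0 = t₀ := rfl
  have hSsucc : ∀ n, S (n + 1) = step (S n) := fun n => rfl
  have hScnt : ∀ n, (S n).Countable := by
    intro n
    induction n with
    | zero => exact ht₀c
    | succ n ih =>
      rw [hSsucc]
      refine ih.union ?_
      refine Set.Countable.biUnion ((hD _ ih).1) fun d _ => ?_
      exact Set.countable_iUnion fun k => (Set.countable_range _).union (Set.countable_range _)
  have hSmono : Monotone S := monotone_nat_of_le_succ fun n => by
    rw [hSsucc]; exact Set.subset_union_left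
  -- the chain of separable C*-subalgebras and its union
  set CC : ℕ → StarSubalgebra ℂ N := fun n => Cl (S n) with hCCDef
  have hCCmono : Monotone CC := fun m n hmn =>
    StarSubalgebra.topologicalClosure_mono (StarAlgebra.adjoin_le ((hSmono hmn).trans (StarAlgebra.subset_adjoin ℂ (S n))))
  set W : StarSubalgebra ℂ N := auxChainUnion CC hCCmono with hWDef
  have hWcoe : (W : Set N) = ⋃ n, (CC n : Set N) := rfl
  set B : StarSubalgebra ℂ N := W.topologicalClosure with hBDef
  have hBcoe : (B : Set N) = closure (⋃ n, (CC n : Set N)) := by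
    rw [hBDef, StarSubalgebra.topologicalClosure_coe, hWcoe]
  have hCCsub : ∀ n, (CC n : Set N) ⊆ (B : Set N) := fun n => by
    rw [hBcoe]
    exact (Set.subset_iUnion (fun n => (CC n : Set N)) n).trans subset_closure
  refine ⟨B, ?_, ?_, ?_, ?_, ?_⟩
  · exact StarSubalgebra.isClosed_topologicalClosure W
  · have : IsSeparable (B : Set N) := by
      rw [hBcoe]
      exact (IsSeparable.iUnion fun n => aux_isSeparable_adjoin_closure (hScnt n)).closure
    exact this.separableSpace
  · -- A ≤ B
    intro a ha
    have h1 : a ∈ closure t₀ := ht₀d ha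
    have h2 : closure t₀ ⊆ (CC 0 : Set N) := by
      rw [hCCDef]
      simp only
      rw [hClDef]
      simp only
      rw [StarSubalgebra.topologicalClosure_coe]
      exact closure_mono ((hS0 ▸ StarAlgebra.subset_adjoin ℂ (S 0) :
        t₀ ⊆ (StarAlgebra.adjoin ℂ (S 0) : Set N)))
    exact hCCsub 0 (h2 h1)
  · exact one_mem B
  · -- density of LgSa in self-adjoint tuples of B
    intro x hx
    rw [Metric.mem_closure_iff]
    intro ε hε
    have hε4 : (0 : ℝ) < ε / 4 := by linarith
    -- approximate components by elements of the union
    have hxB : ∀ i, (x i : N) ∈ closure (⋃ n, (CC n : Set N)) := by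
      intro i
      have := (x i).2
      rw [← SetLike.mem_coe, hBcoe] at this
      exact this
    have happx : ∀ i, ∃ a ∈ ⋃ n, (CC n : Set N), dist (x i : N) a < ε / 4 :=
      fun i => Metric.mem_closure_iff.1 (hxB i) _ hε4
    choose a hamem hadist using happx
    have hcn : ∀ i, ∃ n, a i ∈ CC n := fun i => by
      obtain ⟨n, hn⟩ := Set.mem_iUnion.1 (hamem i)
      exact ⟨n, hn⟩
    choose ni hni using hcn
    set m : ℕ := Finset.univ.sup ni with hmDef
    have ham : ∀ i, a i ∈ CC m := fun i =>
      hCCmono (Finset.le_sup (Finset.mem_univ i)) (hni i)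
    -- symmetrize
    set b : Fin (r + 1) → N := fun i => (2 : ℂ)⁻¹ • (a i + star (a i)) with hbDef
    have hbm : ∀ i, b i ∈ CC m := fun i =>
      SMulMemClass.smul_mem _ (add_mem (ham i) (star_mem (ham i)))
    have hbsa : ∀ i, IsSelfAdjoint (b i) := fun i => aux_isSelfAdjoint_half (a i)
    have hxsa : ∀ i, IsSelfAdjoint ((x i : N)) := by
      intro i
      have := hx i
      rw [IsSelfAdjoint] at this
      exact congrArg Subtype.val this
    have hbdist : ∀ i, dist (x i : N) (b i) < ε / 4 := fun i =>
      lt_of_le_of_lt (aux_dist_half_le (hxsa i) (a i)) (hadist i)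
    -- approximate by the dense countable set
    have hbT : b ∈ Tups (S m) := fun i => ⟨hbm i, hbsa i⟩
    obtain ⟨d, hdmem, hbd⟩ :=
      Metric.mem_closure_iff.1 ((hD _ (hScnt m)).2.2 hbT) _ hε4
    have hbd' : ∀ i, dist (b i) (d i) < ε / 4 := (dist_pi_lt_iff hε4).1 hbd
    have hdsa : ∀ i, IsSelfAdjoint (d i) := fun i => (((hD _ (hScnt m)).2.1) hdmem i).2
    -- pick n with 1/(n+1) < ε/4 and extract the witnesses
    obtain ⟨k, hk⟩ := exists_nat_one_div_lt hε4
    obtain ⟨hZsa, hsum, hZdist⟩ := hZY d k hdsa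
    -- the witnesses lie in S (m+1) ⊆ B
    have hzstep : ∀ i, Z d k i ∈ S (m + 1) := by
      intro i
      rw [hSsucc]
      refine Set.mem_union_right _ ?_
      refine Set.mem_biUnion hdmem ?_
      exact Set.mem_iUnion.2 ⟨k, Set.mem_union_left _ ⟨i, rfl⟩⟩
    have hystep : ∀ i, Y d k i ∈ S (m + 1) := by
      intro i
      rw [hSsucc]
      refine Set.mem_union_right _ ?_
      refine Set.mem_biUnion hdmem ?_
      exact Set.mem_iUnion.2 ⟨k, Set.mem_union_right _ ⟨i, rfl⟩⟩
    have hSsubB : (S (m + 1) : Set N) ⊆ (B : Set N) := by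
      refine Set.Subset.trans ?_ (hCCsub (m + 1))
      refine Set.Subset.trans (StarAlgebra.subset_adjoin ℂ (S (m + 1))) ?_
      exact StarSubalgebra.le_topologicalClosure _
    have hzB : ∀ i, Z d k i ∈ B := fun i => hSsubB (hzstep i)
    have hyB : ∀ i, Y d k i ∈ B := fun i => hSsubB (hystep i)
    set zB : Fin (r + 1) → B := fun i => ⟨Z d k i, hzB i⟩ with hzBDef
    set yB : Fin (r + 1) → B := fun i => ⟨Y d k i, hyB i⟩ with hyBDef
    refine ⟨zB, ⟨fun i => Subtype.ext (hZsa i), yB, ?_⟩, ?_⟩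
    · apply Subtype.ext
      push_cast
      exact hsum
    · rw [dist_pi_lt_iff hε]
      intro i
      have : dist (x i) (zB i) = dist ((x i : N)) (Z d k i) := rfl
      rw [this]
      calc dist ((x i : N)) (Z d k i)
          ≤ dist ((x i : N)) (b i) + dist (b i) (d i) + dist (d i) (Z d k i) :=
            dist_triangle4 _ _ _ _
        _ < ε / 4 + ε / 4 + ε / 4 := by
            have h3 := lt_trans (hZdist i) hk
            exact add_lt_add (add_lt_add (hbdist i) (hbd' i)) h3
        _ < ε := by linarith
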